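/- With the gluing construction J, two vertices u'_i, u''_i ∈ V(G_i) \ {u_i} are mutually maximally distant in J if and only if they are mutually maximally distant in G_i. -/

import Mathlib

open SimpleGraph

/-- `y` is maximally distant from `x` in `G`: no neighbor of `y` is farther from `x` than `y`. -/
def MaxDistantFrom {V : Type*} (G : SimpleGraph V) (y x : V) : Prop :=
  ∀ z, G.Adj y z → G.dist z x ≤ G.dist y x

/-- `u` and `v` are mutually maximally distant in `G`. -/
def MutuallyMaxDistant {V : Type*} (G : SimpleGraph V) (u v : V) : Prop :=
  MaxDistantFrom G u v ∧ MaxDistantFrom G v u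

/-- The strong resolving graph of `G`: edges are the mutually maximally distant pairs. -/
def srGraph {V : Type*} (G : SimpleGraph V) : SimpleGraph V where
  Adj u v := u ≠ v ∧ MutuallyMaxDistant G u v
  symm := ⟨fun u v h => ⟨h.1.symm, h.2.2, h.2.1⟩⟩
  loopless := ⟨fun u h => h.1 rfl⟩

/-- `w` strongly resolves `u` and `v`: `v` lies on a shortest `w`–`u` path, or
`u` lies on a shortest `w`–`v` path. -/
def StronglyResolves {V : Type*} (G : SimpleGraph V) (w u v : V) : Prop :=
  G.dist w v + G.dist v u = G.dist w u ∨ G.dist w u + G.dist u v = G.dist w v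

/-- `R` is a strong resolving set for `G`. -/
def StrongResolvingSet {V : Type*} (G : SimpleGraph V) (R : Set V) : Prop :=
  ∀ u v : V, u ≠ v → ∃ w ∈ R, StronglyResolves G w u v
/-- The graph obtained from the disjoint union of the graphs `G i` and `H` by identifying,
for each `i`, the vertex `u i` of `G i` with the vertex `v i` of `H`.  The vertices of
`G i` other than `u i` keep their identity (as `Sum.inl ⟨i, x⟩`), the vertices of `H`
keep their identity (as `Sum.inr w`), and `u i` is identified with `v i`. -/
def glue {k : ℕ} {α : Fin k → Type*} {β : Type*}
    (G : ∀ i, SimpleGraph (α i)) (H : SimpleGraph β) (u : ∀ i, α i) (v : Fin k → β) :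
    SimpleGraph ((Σ i, {x : α i // x ≠ u i}) ⊕ β) where
  Adj a b :=
    (∃ (i : Fin k) (x y : {z : α i // z ≠ u i}), (G i).Adj x.1 y.1 ∧
        a = Sum.inl ⟨i, x⟩ ∧ b = Sum.inl ⟨i, y⟩) ∨
    (∃ (i : Fin k) (x : {z : α i // z ≠ u i}), (G i).Adj x.1 (u i) ∧
        ((a = Sum.inl ⟨i, x⟩ ∧ b = Sum.inr (v i)) ∨
         (b = Sum.inl ⟨i, x⟩ ∧ a = Sum.inr (v i)))) ∨
    (∃ w w' : β, H.Adj w w' ∧ a = Sum.inr w ∧ b = Sum.inr w')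
  symm := by
    constructor
    rintro a b (⟨i, x, y, hxy, ha, hb⟩ | ⟨i, x, hx, h | h⟩ | ⟨w, w', hww, ha, hb⟩)
    · exact Or.inl ⟨i, y, x, hxy.symm, hb, ha⟩
    · exact Or.inr (Or.inl ⟨i, x, hx, Or.inr h⟩)
    · exact Or.inr (Or.inl ⟨i, x, hx, Or.inl h⟩)
    · exact Or.inr (Or.inr ⟨w', w, hww.symm, hb, ha⟩)
  loopless := by
    constructor
    rintro a (⟨i, x, y, hxy, ha, hb⟩ | ⟨i, x, _, ⟨ha, hb⟩ | ⟨ha, hb⟩⟩ | ⟨w, w', hww, ha, hb⟩)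
    · subst ha
      injection hb with h
      injection h with h1 h2
      subst h2
      exact (G i).loopless.irrefl _ hxy
    · subst ha; simp at hb
    · subst ha; simp at hb
    · subst ha
      injection hb with h
      subst h
      exact H.loopless.irrefl _ hww

section GlueAux

variable {k : ℕ} {α : Fin k → Type*} {β : Type*}
  (G : ∀ i, SimpleGraph (α i)) (H : SimpleGraph β) (u : ∀ i, α i) (v : Fin k → β)

open Classical in
/-- Embedding of `α i` into the vertex set of the glued graph. -/
noncomputable def glueEmb (i : Fin k) (z : α i) : (Σ j, {x : α j // x ≠ u j}) ⊕ β :=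
  if h : z = u i then Sum.inr (v i) else Sum.inl ⟨i, ⟨z, h⟩⟩

lemma glueEmb_ne (i : Fin k) (z : {x : α i // x ≠ u i}) :
    glueEmb u v i z.1 = Sum.inl ⟨i, z⟩ := by
  simp [glueEmb, z.2]

lemma glueEmb_adj (i : Fin k) {a b : α i} (hab : (G i).Adj a b) :
    (glue G H u v).Adj (glueEmb u v i a) (glueEmb u v i b) := by
  by_cases ha : a = u i <;> by_cases hb : b = u i
  · exact absurd (ha.trans hb.symm) hab.ne
  · exact Or.inr (Or.inl ⟨i, ⟨b, hb⟩, by simpa [ha] using hab.symm,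
      Or.inr ⟨by simp [glueEmb, hb], by simp [glueEmb, ha]⟩⟩)
  · exact Or.inr (Or.inl ⟨i, ⟨a, ha⟩, by simpa [hb] using hab,
      Or.inl ⟨by simp [glueEmb, ha], by simp [glueEmb, hb]⟩⟩)
  · exact Or.inl ⟨i, ⟨a, ha⟩, ⟨b, hb⟩, hab, by simp [glueEmb, ha], by simp [glueEmb, hb]⟩

/-- The graph homomorphism from `G i` to the glued graph. -/
noncomputable def glueHom (i : Fin k) : G i →g glue G H u v where
  toFun := glueEmb u v i
  map_rel' := glueEmb_adj G H u v i

/-- Projection from the glued vertex set to `α i`. -/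
def glueProj (i : Fin k) : ((Σ j, {x : α j // x ≠ u j}) ⊕ β) → α i
  | Sum.inl ⟨j, z⟩ => if h : j = i then h ▸ z.1 else u i
  | Sum.inr _ => u i

lemma glueProj_inl (i : Fin k) (z : {x : α i // x ≠ u i}) :
    glueProj (β := β) u i (Sum.inl ⟨i, z⟩) = z.1 := by
  simp [glueProj]

lemma glueProj_glueEmb (i : Fin k) (a : α i) :
    glueProj u i (glueEmb u v i a) = a := by
  by_cases h : a = u i <;> simp [glueEmb, glueProj, h]

lemma glueProj_adj (i : Fin k) {a b} (hab : (glue G H u v).Adj a b) :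
    glueProj u i a = glueProj u i b ∨ (G i).Adj (glueProj u i a) (glueProj u i b) := by
  obtain ⟨j, x, y, hxy, rfl, rfl⟩ | ⟨j, x, hx, ⟨rfl, rfl⟩ | ⟨rfl, rfl⟩⟩ | ⟨w, w', _, rfl, rfl⟩ := hab
  · by_cases h : j = i
    · subst h; right; simpa [glueProj] using hxy
    · left; simp [glueProj, h]
  · by_cases h : j = i
    · subst h; right; simpa [glueProj] using hx
    · left; simp [glueProj, h]
  · by_cases h : j = i
    · subst h; right; simpa [glueProj] using hx.symm
    · left; simp [glueProj, h]
  · left; rfl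

lemma glueProj_walk (i : Fin k) {a b} (p : (glue G H u v).Walk a b) :
    ∃ q : (G i).Walk (glueProj u i a) (glueProj u i b), q.length ≤ p.length := by
  induction p with
  | nil => exact ⟨.nil, le_rfl⟩
  | cons h p ih =>
    obtain ⟨q, hq⟩ := ih
    rcases glueProj_adj G H u v i h with he | ha
    · exact ⟨q.copy he.symm rfl, by simpa using hq.trans (Nat.le_succ _)⟩
    · exact ⟨.cons ha q, by simpa using Nat.succ_le_succ hq⟩

lemma glue_dist_eq (i : Fin k) (hGc : (G i).Connected) (a b : α i) :
    (glue G H u v).dist (glueEmb u v i a) (glueEmb u v i b) = (G i).dist a b := by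
  obtain ⟨p, hp⟩ := ((hGc.preconnected a b)).exists_walk_length_eq_dist
  have hle : (glue G H u v).dist (glueEmb u v i a) (glueEmb u v i b) ≤ (G i).dist a b := by
    have := SimpleGraph.dist_le (p.map (glueHom G H u v i))
    simp [hp] at this
    exact this
  have hreach : (glue G H u v).Reachable (glueEmb u v i a) (glueEmb u v i b) :=
    ⟨p.map (glueHom G H u v i)⟩
  obtain ⟨q, hq⟩ := hreach.exists_walk_length_eq_dist
  obtain ⟨r, hr⟩ := glueProj_walk G H u v i q
  have hge : (G i).dist a b ≤ (glue G H u v).dist (glueEmb u v i a) (glueEmb u v i b) := by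
    have := SimpleGraph.dist_le
      (r.copy (glueProj_glueEmb u v i a) (glueProj_glueEmb u v i b))
    simp only [SimpleGraph.Walk.length_copy] at this
    omega
  omega

lemma glue_adj_inl (i : Fin k) (x : {z : α i // z ≠ u i}) {b}
    (h : (glue G H u v).Adj (Sum.inl ⟨i, x⟩) b) :
    ∃ w : α i, (G i).Adj x.1 w ∧ b = glueEmb u v i w := by
  obtain ⟨j, x', y', hxy, ha, rfl⟩ | ⟨j, x', hx', ⟨ha, rfl⟩ | ⟨rfl, ha⟩⟩ | ⟨w, w', _, ha, _⟩ := h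
  · obtain ⟨rfl, hx⟩ : i = j ∧ HEq x x' := by simpa using ha
    cases eq_of_heq hx
    exact ⟨y'.1, hxy, (glueEmb_ne u v i y').symm⟩
  · obtain ⟨rfl, hx⟩ : i = j ∧ HEq x x' := by simpa using ha
    cases eq_of_heq hx
    exact ⟨u i, hx', by simp [glueEmb]⟩
  · simp at ha
  · simp at ha

end GlueAux

/-- Two vertices of `V(G i) \ {u i}` are mutually maximally distant in the glued graph
`J` iff they are mutually maximally distant in `G i`. -/
theorem glue_mmd_within_part {k : ℕ} {α : Fin k → Type*} {β : Type*}
    (G : ∀ i, SimpleGraph (α i)) (H : SimpleGraph β)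
    (u : ∀ i, α i) (v : Fin k → β)
    (hGc : ∀ i, (G i).Connected) (hHc : H.Connected)
    (hGn : ∀ i, Nontrivial (α i)) (hHn : Nontrivial β)
    (i : Fin k) (x y : {z : α i // z ≠ u i}) :
    MutuallyMaxDistant (glue G H u v) (Sum.inl ⟨i, x⟩) (Sum.inl ⟨i, y⟩) ↔
      MutuallyMaxDistant (G i) x.1 y.1 := by
  have hx := glueEmb_ne u v i x
  have hy := glueEmb_ne u v i y
  constructor
  · rintro ⟨h1, h2⟩
    constructor
    · intro z hz
      have := h1 (glueEmb u v i z) (by rw [← hx]; exact glueEmb_adj G H u v i hz)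
      rwa [← hx, ← hy, glue_dist_eq G H u v i (hGc i), glue_dist_eq G H u v i (hGc i)] at this
    · intro z hz
      have := h2 (glueEmb u v i z) (by rw [← hy]; exact glueEmb_adj G H u v i hz)
      rwa [← hx, ← hy, glue_dist_eq G H u v i (hGc i), glue_dist_eq G H u v i (hGc i)] at this
  · rintro ⟨h1, h2⟩
    constructor
    · intro z hz
      obtain ⟨w, hw, rfl⟩ := glue_adj_inl G H u v i x hz
      rw [← hx, ← hy, glue_dist_eq G H u v i (hGc i), glue_dist_eq G H u v i (hGc i)]
      exact h1 w hw
    · intro z hz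
      obtain ⟨w, hw, rfl⟩ := glue_adj_inl G H u v i y hz
      rw [← hx, ← hy, glue_dist_eq G H u v i (hGc i), glue_dist_eq G H u v i (hGc i)]
      exact h2 w hw
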